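/- Let μ > 0 and define T(k) = ∫₀^{k^{-2}} α^{-2} exp(−k²/α) exp(−α μ²) dα for k > 0. There exist real constants c, c′ and C > 0 such that for all k with 0 < k ≤ min(1, 1/μ), one has |T(k) − c/k² − c′ log(k²)| ≤ C. That is, the non-planar tadpole amplitude has the form T(k) = c/k² + c′ log(k²) + F(k) with F bounded near k = 0, exhibiting UV/IR mixing. -/

import Mathlib

open MeasureTheory

private lemma exp_neg_le_inv' {x : ℝ} (hx : 0 < x) : Real.exp (-x) ≤ x⁻¹ := by
  rw [Real.exp_neg]
  exact inv_anti₀ hx (by linarith [Real.add_one_le_exp x])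

private lemma exp_neg_le_four {x : ℝ} (hx : 0 < x) : Real.exp (-x) ≤ 4 / x ^ 2 := by
  have hxsq : x ^ 2 / 4 ≤ Real.exp x := by
    have h2 : x / 2 + 1 ≤ Real.exp (x / 2) := Real.add_one_le_exp _
    have hx2 : Real.exp (x / 2) * Real.exp (x / 2) = Real.exp x := by
      rw [← Real.exp_add]; norm_num
    nlinarith [Real.exp_pos (x / 2)]
  have h := inv_anti₀ (by positivity) hxsq
  rw [Real.exp_neg]
  calc (Real.exp x)⁻¹ ≤ (x ^ 2 / 4)⁻¹ := h
    _ = 4 / x ^ 2 := by field_simp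

private lemma exp_taylor2 {x : ℝ} (hx : 0 ≤ x) : |Real.exp (-x) - 1 + x| ≤ x ^ 2 / 2 := by
  have hlow : 0 ≤ Real.exp (-x) - 1 + x := by linarith [Real.add_one_le_exp (-x)]
  have hd : ∀ y : ℝ, HasDerivAt (fun y : ℝ => 1 - y + y ^ 2 / 2 - Real.exp (-y))
      (y + Real.exp (-y) - 1) y := by
    intro y
    have h1 : HasDerivAt (fun y : ℝ => -y) (-1) y := (hasDerivAt_id y).neg
    have h2 : HasDerivAt (fun y : ℝ => Real.exp (-y)) (Real.exp (-y) * -1) y := h1.exp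
    have h3 : HasDerivAt (fun y : ℝ => 1 - y + y ^ 2 / 2) (0 - 1 + (2 : ℕ) * y ^ 1 / 2) y :=
      ((hasDerivAt_const y (1 : ℝ)).sub (hasDerivAt_id y)).add ((hasDerivAt_pow 2 y).div_const 2)
    refine (h3.sub h2).congr_deriv (Eq.symm ?_)
    push_cast
    ring
  have hmono : MonotoneOn (fun y : ℝ => 1 - y + y ^ 2 / 2 - Real.exp (-y)) (Set.Ici (0 : ℝ)) := by
    apply monotoneOn_of_deriv_nonneg (convex_Ici 0)
    · exact fun y _ => ((hd y).continuousAt).continuousWithinAt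
    · exact fun y _ => ((hd y).differentiableAt).differentiableWithinAt
    · intro y _
      rw [(hd y).deriv]
      linarith [Real.add_one_le_exp (-y)]
  have h0 := hmono (Set.self_mem_Ici) (Set.mem_Ici.mpr hx) hx
  simp only [Real.exp_zero] at h0
  rw [abs_of_nonneg hlow]
  norm_num at h0
  linarith

private lemma abs_add₄ (a b c d : ℝ) : |a + b + c + d| ≤ |a| + |b| + |c| + |d| := by
  have h1 := abs_add_le (a + b + c) d
  have h2 := abs_add_le (a + b) c
  have h3 := abs_add_le a b
  linarith


set_option maxHeartbeats 2000000 in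
/-- UV/IR mixing of the naive noncommutative `φ⁴` model: the non-planar tadpole
amplitude `T(k) = ∫₀^{k⁻²} α⁻² e^{-k²/α} e^{-αμ²} dα` behaves as
`T(k) = c/k² + c′ log(k²) + O(1)` for small external momentum `k`. -/
theorem nonplanar_tadpole_UV_IR_mixing (μ : ℝ) (hμ : 0 < μ) :
    ∃ c c' : ℝ, ∃ C > (0 : ℝ), ∀ k : ℝ, 0 < k → k ≤ min 1 (1 / μ) →
      |(∫ α in (0 : ℝ)..((k ^ 2)⁻¹),
            α ^ (-2 : ℤ) * Real.exp (-k ^ 2 / α) * Real.exp (-α * μ ^ 2))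
          - c / k ^ 2 - c' * Real.log (k ^ 2)| ≤ C := by
  refine ⟨1, μ ^ 2, 4 + 2 * μ ^ 2 + μ ^ 4, by positivity, ?_⟩
  intro k hk hkle
  have hk1 : k ≤ 1 := le_trans hkle (min_le_left _ _)
  have hk0 : k ≠ 0 := ne_of_gt hk
  set K : ℝ := (k ^ 2)⁻¹ with hK
  have hk2 : 0 < k ^ 2 := by positivity
  have hk21 : k ^ 2 ≤ 1 := by nlinarith
  have hKpos : 0 < K := by positivity
  have h1K : 1 ≤ K := by
    rw [hK]
    exact (one_le_inv₀ hk2).mpr hk21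
  set f : ℝ → ℝ := fun α => α ^ (-2 : ℤ) * Real.exp (-k ^ 2 / α) * Real.exp (-α * μ ^ 2)
    with hf
  set g : ℝ → ℝ := fun α => α ^ (-2 : ℤ) * Real.exp (-k ^ 2 / α) with hg
  have hzp : ∀ α : ℝ, α ^ (-2 : ℤ) = (α ^ 2)⁻¹ := fun α => by
    rw [zpow_neg]; norm_cast
  -- basic pointwise facts
  have hE1le1 : ∀ α : ℝ, 0 < α → Real.exp (-k ^ 2 / α) ≤ 1 := by
    intro α hα
    calc Real.exp (-k ^ 2 / α) ≤ Real.exp 0 := by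
          apply Real.exp_le_exp.mpr
          rw [neg_div]
          simp [le_of_lt, div_pos hk2 hα]
      _ = 1 := Real.exp_zero
  have hE2le1 : ∀ α : ℝ, 0 ≤ α → Real.exp (-α * μ ^ 2) ≤ 1 := by
    intro α hα
    calc Real.exp (-α * μ ^ 2) ≤ Real.exp 0 := by
          apply Real.exp_le_exp.mpr
          nlinarith
      _ = 1 := Real.exp_zero
  have hgnn : ∀ α : ℝ, 0 ≤ g α := by
    intro α
    rw [hg]
    simp only [hzp]
    positivity
  have hgb : ∀ α : ℝ, 0 < α → g α ≤ 4 / k ^ 4 := by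
    intro α hα
    have h1 : Real.exp (-k ^ 2 / α) ≤ 4 / (k ^ 2 / α) ^ 2 := by
      have := exp_neg_le_four (x := k ^ 2 / α) (by positivity)
      rwa [← neg_div] at this
    calc g α = (α ^ 2)⁻¹ * Real.exp (-k ^ 2 / α) := by rw [hg]; simp only [hzp]
      _ ≤ (α ^ 2)⁻¹ * (4 / (k ^ 2 / α) ^ 2) := by
          apply mul_le_mul_of_nonneg_left h1 (by positivity)
      _ = 4 / k ^ 4 := by field_simp
  have hfnn : ∀ α : ℝ, 0 ≤ α → 0 ≤ f α := by
    intro α hα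
    have : f α = g α * Real.exp (-α * μ ^ 2) := by rw [hf, hg]
    rw [this]
    exact mul_nonneg (hgnn α) (Real.exp_pos _).le
  have hfb : ∀ α : ℝ, 0 < α → f α ≤ 4 / k ^ 4 := by
    intro α hα
    have h1 : f α = g α * Real.exp (-α * μ ^ 2) := by rw [hf, hg]
    calc f α = g α * Real.exp (-α * μ ^ 2) := h1
      _ ≤ g α * 1 := mul_le_mul_of_nonneg_left (hE2le1 α hα.le) (hgnn α)
      _ = g α := mul_one _
      _ ≤ 4 / k ^ 4 := hgb α hα
  -- measurability
  have hfm : Measurable f := by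
    have hfe : f = fun α : ℝ => (α ^ 2)⁻¹ * Real.exp (-k ^ 2 / α) * Real.exp (-α * μ ^ 2) := by
      funext α; rw [hf]; simp only [hzp]
    rw [hfe]
    exact ((measurable_id.pow_const 2).inv.mul
      (Real.measurable_exp.comp (measurable_const.div measurable_id))).mul
      (Real.measurable_exp.comp (measurable_id.neg.mul measurable_const))
  have hgm : Measurable g := by
    have hge : g = fun α : ℝ => (α ^ 2)⁻¹ * Real.exp (-k ^ 2 / α) := by
      funext α; rw [hg]; simp only [hzp]
    rw [hge]
    exact (measurable_id.pow_const 2).inv.mul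
      (Real.measurable_exp.comp (measurable_const.div measurable_id))
  -- integrability on [0, K]
  have hfint : IntervalIntegrable f volume 0 K := by
    rw [intervalIntegrable_iff_integrableOn_Ioc_of_le hKpos.le]
    apply Measure.integrableOn_of_bounded (M := 4 / k ^ 4) measure_Ioc_lt_top.ne
      hfm.aestronglyMeasurable
    filter_upwards [ae_restrict_mem measurableSet_Ioc] with α hα
    rw [Real.norm_eq_abs, abs_of_nonneg (hfnn α hα.1.le)]
    exact hfb α hα.1
  have hgint : IntervalIntegrable g volume 0 K := by
    rw [intervalIntegrable_iff_integrableOn_Ioc_of_le hKpos.le]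
    apply Measure.integrableOn_of_bounded (M := 4 / k ^ 4) measure_Ioc_lt_top.ne
      hgm.aestronglyMeasurable
    filter_upwards [ae_restrict_mem measurableSet_Ioc] with α hα
    rw [Real.norm_eq_abs, abs_of_nonneg (hgnn α)]
    exact hgb α hα.1
  -- the antiderivative of g
  set G : ℝ → ℝ := fun α => if α ≤ 0 then 0 else (k ^ 2)⁻¹ * Real.exp (-k ^ 2 / α) with hG
  have hGderiv : ∀ x ∈ Set.Ioo 0 K, HasDerivWithinAt G (g x) (Set.Ioi x) x := by
    intro x hx
    have hx0 : 0 < x := hx.1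
    have h0 : HasDerivAt (fun α : ℝ => -k ^ 2 * α⁻¹) (-k ^ 2 * -(x ^ 2)⁻¹) x :=
      (hasDerivAt_inv hx0.ne').const_mul _
    have h1 : HasDerivAt (fun α : ℝ => -k ^ 2 / α) (-k ^ 2 * -(x ^ 2)⁻¹) x :=
      h0.congr_of_eventuallyEq (Filter.Eventually.of_forall fun y => div_eq_mul_inv _ _)
    have h2 := (h1.exp).const_mul ((k ^ 2)⁻¹)
    have h3 : HasDerivAt (fun α : ℝ => (k ^ 2)⁻¹ * Real.exp (-k ^ 2 / α)) (g x) x := by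
      refine h2.congr_deriv (Eq.symm ?_)
      rw [hg]
      simp only [hzp]
      field_simp
      try ring
    have heq : G =ᶠ[nhds x] fun α : ℝ => (k ^ 2)⁻¹ * Real.exp (-k ^ 2 / α) := by
      filter_upwards [eventually_gt_nhds hx0] with α hα
      rw [hG]
      simp [not_le.mpr hα]
    exact (h3.congr_of_eventuallyEq heq).hasDerivWithinAt
  have hGcont : ContinuousOn G (Set.Icc 0 K) := by
    intro x hx
    rcases eq_or_lt_of_le hx.1 with h0 | h0
    · -- x = 0
      have hx0 : x = 0 := h0.symm
      subst hx0
      have hG0 : G 0 = 0 := by rw [hG]; simp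
      rw [ContinuousWithinAt, hG0]
      apply squeeze_zero' (g := fun y : ℝ => y * ((k ^ 2)⁻¹ * (k ^ 2)⁻¹))
      · apply eventually_nhdsWithin_of_forall
        intro y _
        rw [hG]
        by_cases hy0 : y ≤ 0
        · simp [hy0]
        · simp only [if_neg hy0]
          positivity
      · apply eventually_nhdsWithin_of_forall
        intro y hy
        by_cases hy0 : y ≤ 0
        · have : y = 0 := le_antisymm hy0 hy.1
          rw [hG]; simp [this]
        · push_neg at hy0
          have h1 : Real.exp (-k ^ 2 / y) ≤ (k ^ 2 / y)⁻¹ := by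
            have := exp_neg_le_inv' (x := k ^ 2 / y) (by positivity)
            rwa [← neg_div] at this
          have h2 : (k ^ 2 / y)⁻¹ = y / k ^ 2 := inv_div _ _
          calc G y = (k ^ 2)⁻¹ * Real.exp (-k ^ 2 / y) := by
                rw [hG]; simp [not_le.mpr hy0]
            _ ≤ (k ^ 2)⁻¹ * (y / k ^ 2) := by
                apply mul_le_mul_of_nonneg_left (h1.trans_eq h2) (by positivity)
            _ = y * ((k ^ 2)⁻¹ * (k ^ 2)⁻¹) := by ring
      · have hc : Continuous fun y : ℝ => y * ((k ^ 2)⁻¹ * (k ^ 2)⁻¹) := by continuity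
        have := hc.tendsto 0
        simp only [zero_mul] at this
        exact this.mono_left nhdsWithin_le_nhds
    · -- x > 0
      apply ContinuousAt.continuousWithinAt
      have heq : G =ᶠ[nhds x] fun α : ℝ => (k ^ 2)⁻¹ * Real.exp (-k ^ 2 / α) := by
        filter_upwards [eventually_gt_nhds h0] with α hα
        rw [hG]
        simp [not_le.mpr hα]
      rw [continuousAt_congr heq]
      have hca : ContinuousAt (fun α : ℝ => -k ^ 2 / α) x :=
        ContinuousAt.div continuousAt_const continuousAt_id h0.ne'
      exact (continuousAt_const.mul (Real.continuous_exp.continuousAt.comp hca))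
  have hgK : ∫ α in (0:ℝ)..K, g α = (k ^ 2)⁻¹ * Real.exp (-(k ^ 2 * k ^ 2)) := by
    rw [intervalIntegral.integral_eq_sub_of_hasDeriv_right_of_le hKpos.le hGcont hGderiv hgint]
    rw [hG]
    simp only [if_neg (not_le.mpr hKpos), if_pos le_rfl, sub_zero]
    have hdiv : k ^ 2 / (k ^ 2)⁻¹ = k ^ 2 * k ^ 2 := by field_simp
    rw [hK, neg_div, hdiv]
  -- subinterval integrability
  have hsub1 : Set.uIcc (0:ℝ) (k ^ 2) ⊆ Set.uIcc (0:ℝ) K := by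
    rw [Set.uIcc_of_le hk2.le, Set.uIcc_of_le hKpos.le]
    exact Set.Icc_subset_Icc le_rfl (hk21.trans h1K)
  have hsub2 : Set.uIcc (k ^ 2) (1:ℝ) ⊆ Set.uIcc (0:ℝ) K := by
    rw [Set.uIcc_of_le hk21, Set.uIcc_of_le hKpos.le]
    exact Set.Icc_subset_Icc hk2.le h1K
  have hsub3 : Set.uIcc (1:ℝ) K ⊆ Set.uIcc (0:ℝ) K := by
    rw [Set.uIcc_of_le h1K, Set.uIcc_of_le hKpos.le]
    exact Set.Icc_subset_Icc zero_le_one le_rfl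
  have hfg1 : IntervalIntegrable (fun α => f α - g α) volume 0 (k ^ 2) :=
    (hfint.mono_set hsub1).sub (hgint.mono_set hsub1)
  have hfg2 : IntervalIntegrable (fun α => f α - g α) volume (k ^ 2) 1 :=
    (hfint.mono_set hsub2).sub (hgint.mono_set hsub2)
  have hfg3 : IntervalIntegrable (fun α => f α - g α) volume 1 K :=
    (hfint.mono_set hsub3).sub (hgint.mono_set hsub3)
  have hsplit : (∫ α in (0:ℝ)..K, (f α - g α))
      = (∫ α in (0:ℝ)..(k ^ 2), (f α - g α)) + (∫ α in (k ^ 2)..(1:ℝ), (f α - g α))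
        + (∫ α in (1:ℝ)..K, (f α - g α)) := by
    have e1 := intervalIntegral.integral_add_adjacent_intervals hfg1 hfg2
    have e2 := intervalIntegral.integral_add_adjacent_intervals (hfg1.trans hfg2) hfg3
    linarith
  have hsubint : (∫ α in (0:ℝ)..K, (f α - g α))
      = (∫ α in (0:ℝ)..K, f α) - ∫ α in (0:ℝ)..K, g α :=
    intervalIntegral.integral_sub hfint hgint
  -- piece (i): (0, k²]
  have hI1 : |∫ α in (0:ℝ)..(k ^ 2), (f α - g α)| ≤ μ ^ 2 := by
    have hb : ∀ α ∈ Set.uIoc (0:ℝ) (k ^ 2), ‖f α - g α‖ ≤ μ ^ 2 / k ^ 2 := by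
      intro α hα
      rw [Set.uIoc_of_le hk2.le] at hα
      obtain ⟨hα0, hαk⟩ := hα
      have hE1 : Real.exp (-k ^ 2 / α) ≤ α / k ^ 2 := by
        have h := exp_neg_le_inv' (x := k ^ 2 / α) (by positivity)
        rwa [← neg_div, inv_div] at h
      have hfgeq : f α - g α = g α * (Real.exp (-α * μ ^ 2) - 1) := by
        rw [hf, hg]; ring
      rw [Real.norm_eq_abs, hfgeq, abs_mul, abs_of_nonneg (hgnn α)]
      have habs : |Real.exp (-α * μ ^ 2) - 1| ≤ α * μ ^ 2 := by
        rw [abs_of_nonpos (by linarith [hE2le1 α hα0.le])]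
        linarith [Real.add_one_le_exp (-α * μ ^ 2)]
      calc g α * |Real.exp (-α * μ ^ 2) - 1| ≤ g α * (α * μ ^ 2) :=
            mul_le_mul_of_nonneg_left habs (hgnn α)
        _ ≤ ((α ^ 2)⁻¹ * (α / k ^ 2)) * (α * μ ^ 2) := by
            apply mul_le_mul_of_nonneg_right _ (by positivity)
            simp only [hg, hzp]
            exact mul_le_mul_of_nonneg_left hE1 (by positivity)
        _ = μ ^ 2 / k ^ 2 := by field_simp
    have h := intervalIntegral.norm_integral_le_of_norm_le_const hb
    rw [Real.norm_eq_abs] at h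
    calc |∫ α in (0:ℝ)..(k ^ 2), (f α - g α)| ≤ μ ^ 2 / k ^ 2 * |k ^ 2 - 0| := h
      _ = μ ^ 2 := by rw [sub_zero, abs_of_pos hk2]; field_simp
  -- piece (iii): [1, K]
  have hI3 : |∫ α in (1:ℝ)..K, (f α - g α)| ≤ 1 := by
    have hbint : IntervalIntegrable (fun α : ℝ => α ^ (-2:ℤ)) volume 1 K := by
      apply ContinuousOn.intervalIntegrable
      have he : (fun α : ℝ => α ^ (-2:ℤ)) = fun α : ℝ => (α ^ 2)⁻¹ := funext hzp
      rw [he, Set.uIcc_of_le h1K]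
      apply ContinuousOn.inv₀ ((continuous_pow 2).continuousOn)
      intro x hx
      exact pow_ne_zero 2 (by linarith [hx.1])
    have hb : ∀ᵐ t ∂volume.restrict (Set.uIoc (1:ℝ) K), ‖f t - g t‖ ≤ t ^ (-2:ℤ) := by
      filter_upwards [ae_restrict_mem measurableSet_uIoc] with α hα
      rw [Set.uIoc_of_le h1K] at hα
      have hα0 : (0:ℝ) < α := lt_trans zero_lt_one hα.1
      have hfgeq : f α - g α = g α * (Real.exp (-α * μ ^ 2) - 1) := by
        rw [hf, hg]; ring
      rw [Real.norm_eq_abs, hfgeq, abs_mul, abs_of_nonneg (hgnn α)]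
      have habs : |Real.exp (-α * μ ^ 2) - 1| ≤ 1 := by
        rw [abs_of_nonpos (by linarith [hE2le1 α hα0.le])]
        linarith [Real.exp_pos (-α * μ ^ 2)]
      calc g α * |Real.exp (-α * μ ^ 2) - 1| ≤ g α * 1 :=
            mul_le_mul_of_nonneg_left habs (hgnn α)
        _ = g α := mul_one _
        _ ≤ α ^ (-2:ℤ) := by
            simp only [hg]
            have h2 := mul_le_mul_of_nonneg_left (hE1le1 α hα0)
              (a := α ^ (-2:ℤ)) (by rw [hzp]; positivity)
            simpa using h2
    have h := intervalIntegral.norm_integral_le_abs_of_norm_le hb hbint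
    rw [Real.norm_eq_abs] at h
    have hval : (∫ α in (1:ℝ)..K, α ^ (-2:ℤ)) = 1 - k ^ 2 := by
      rw [integral_zpow]
      · have h1 : ((-2:ℤ) + 1) = -1 := by norm_num
        rw [h1]
        norm_num [hK]
        ring
      · refine Or.inr ⟨by norm_num, ?_⟩
        rw [Set.uIcc_of_le h1K]
        intro h0
        exact absurd h0.1 (by norm_num)
    calc |∫ α in (1:ℝ)..K, (f α - g α)| ≤ |∫ α in (1:ℝ)..K, α ^ (-2:ℤ)| := h
      _ = 1 - k ^ 2 := by rw [hval]; exact abs_of_nonneg (by linarith)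
      _ ≤ 1 := by linarith
  -- piece (ii): [k², 1]
  have hinvint : IntervalIntegrable (fun α : ℝ => μ ^ 2 * α⁻¹) volume (k ^ 2) 1 := by
    apply ContinuousOn.intervalIntegrable
    rw [Set.uIcc_of_le hk21]
    apply ContinuousOn.mul continuousOn_const
    apply ContinuousOn.inv₀ continuousOn_id
    intro x hx
    exact ne_of_gt (lt_of_lt_of_le hk2 hx.1)
  have hlogval : (∫ α in (k ^ 2)..(1:ℝ), α⁻¹) = - Real.log (k ^ 2) := by
    rw [integral_inv_of_pos hk2 one_pos, one_div, Real.log_inv]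
  have hzint : IntervalIntegrable (fun α : ℝ => α ^ (-2:ℤ)) volume (k ^ 2) 1 := by
    apply ContinuousOn.intervalIntegrable
    have he : (fun α : ℝ => α ^ (-2:ℤ)) = fun α : ℝ => (α ^ 2)⁻¹ := funext hzp
    rw [he, Set.uIcc_of_le hk21]
    apply ContinuousOn.inv₀ ((continuous_pow 2).continuousOn)
    intro x hx
    exact pow_ne_zero 2 (ne_of_gt (lt_of_lt_of_le hk2 hx.1))
  have hzval : (∫ α in (k ^ 2)..(1:ℝ), α ^ (-2:ℤ)) = (k ^ 2)⁻¹ - 1 := by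
    rw [integral_zpow]
    · have h1 : ((-2:ℤ) + 1) = -1 := by norm_num
      rw [h1]
      norm_num
      ring
    · refine Or.inr ⟨by norm_num, ?_⟩
      rw [Set.uIcc_of_le hk21]
      intro h0
      exact absurd h0.1 (not_le.mpr hk2)
  have hI2 : |(∫ α in (k ^ 2)..(1:ℝ), (f α - g α)) - μ ^ 2 * Real.log (k ^ 2)|
      ≤ μ ^ 2 + μ ^ 4 / 2 := by
    have hconv : (∫ α in (k ^ 2)..(1:ℝ), (f α - g α)) - μ ^ 2 * Real.log (k ^ 2)
        = ∫ α in (k ^ 2)..(1:ℝ), (f α - g α + μ ^ 2 * α⁻¹) := by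
      have hadd := intervalIntegral.integral_add hfg2 hinvint
      rw [hadd, intervalIntegral.integral_const_mul, hlogval]
      ring
    rw [hconv]
    have hBint : IntervalIntegrable (fun α : ℝ => μ ^ 2 * k ^ 2 * α ^ (-2:ℤ) + μ ^ 4 / 2)
        volume (k ^ 2) 1 := (hzint.const_mul _).add intervalIntegrable_const
    have hb : ∀ᵐ t ∂volume.restrict (Set.uIoc (k ^ 2) (1:ℝ)),
        ‖f t - g t + μ ^ 2 * t⁻¹‖ ≤ μ ^ 2 * k ^ 2 * t ^ (-2:ℤ) + μ ^ 4 / 2 := by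
      filter_upwards [ae_restrict_mem measurableSet_uIoc] with α hα
      rw [Set.uIoc_of_le hk21] at hα
      obtain ⟨hαk, hα1⟩ := hα
      have hα0 : 0 < α := lt_trans hk2 hαk
      have hkey : f α - g α + μ ^ 2 * α⁻¹
          = (α ^ 2)⁻¹ * Real.exp (-k ^ 2 / α) * (Real.exp (-α * μ ^ 2) - 1 + α * μ ^ 2)
            + μ ^ 2 * α⁻¹ * (1 - Real.exp (-k ^ 2 / α)) := by
        simp only [hf, hg, hzp]
        field_simp
        ring
      rw [hkey, Real.norm_eq_abs]
      simp only [hzp]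
      have ht1 : |Real.exp (-α * μ ^ 2) - 1 + α * μ ^ 2| ≤ (α * μ ^ 2) ^ 2 / 2 := by
        have h := exp_taylor2 (x := α * μ ^ 2) (by positivity)
        rwa [← neg_mul] at h
      have hE1a : (0:ℝ) ≤ Real.exp (-k ^ 2 / α) := (Real.exp_pos _).le
      have hE1b : Real.exp (-k ^ 2 / α) ≤ 1 := hE1le1 α hα0
      have hE1c : 1 - Real.exp (-k ^ 2 / α) ≤ k ^ 2 / α := by
        have h := Real.add_one_le_exp (-k ^ 2 / α)
        have h2 : -k ^ 2 / α + 1 = 1 - k ^ 2 / α := by ring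
        linarith [h, h2]
      have hA : |(α ^ 2)⁻¹ * Real.exp (-k ^ 2 / α)
          * (Real.exp (-α * μ ^ 2) - 1 + α * μ ^ 2)| ≤ μ ^ 4 / 2 := by
        rw [abs_mul, abs_mul, abs_of_nonneg (by positivity : (0:ℝ) ≤ (α ^ 2)⁻¹),
          abs_of_nonneg hE1a]
        calc (α ^ 2)⁻¹ * Real.exp (-k ^ 2 / α) * |Real.exp (-α * μ ^ 2) - 1 + α * μ ^ 2|
            ≤ (α ^ 2)⁻¹ * 1 * ((α * μ ^ 2) ^ 2 / 2) := by
              apply mul_le_mul (mul_le_mul_of_nonneg_left hE1b (by positivity)) ht1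
                (abs_nonneg _) (by positivity)
          _ = μ ^ 4 / 2 := by field_simp
      have hB : |μ ^ 2 * α⁻¹ * (1 - Real.exp (-k ^ 2 / α))| ≤ μ ^ 2 * k ^ 2 * (α ^ 2)⁻¹ := by
        rw [abs_mul, abs_of_nonneg (by positivity : (0:ℝ) ≤ μ ^ 2 * α⁻¹),
          abs_of_nonneg (by linarith : (0:ℝ) ≤ 1 - Real.exp (-k ^ 2 / α))]
        calc μ ^ 2 * α⁻¹ * (1 - Real.exp (-k ^ 2 / α)) ≤ μ ^ 2 * α⁻¹ * (k ^ 2 / α) :=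
              mul_le_mul_of_nonneg_left hE1c (by positivity)
          _ = μ ^ 2 * k ^ 2 * (α ^ 2)⁻¹ := by field_simp
      calc |(α ^ 2)⁻¹ * Real.exp (-k ^ 2 / α) * (Real.exp (-α * μ ^ 2) - 1 + α * μ ^ 2)
            + μ ^ 2 * α⁻¹ * (1 - Real.exp (-k ^ 2 / α))|
          ≤ |(α ^ 2)⁻¹ * Real.exp (-k ^ 2 / α) * (Real.exp (-α * μ ^ 2) - 1 + α * μ ^ 2)|
            + |μ ^ 2 * α⁻¹ * (1 - Real.exp (-k ^ 2 / α))| := abs_add_le _ _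
        _ ≤ μ ^ 4 / 2 + μ ^ 2 * k ^ 2 * (α ^ 2)⁻¹ := add_le_add hA hB
        _ = μ ^ 2 * k ^ 2 * (α ^ 2)⁻¹ + μ ^ 4 / 2 := by ring
    have h := intervalIntegral.norm_integral_le_abs_of_norm_le hb hBint
    rw [Real.norm_eq_abs] at h
    have hBval : (∫ α in (k ^ 2)..(1:ℝ), (μ ^ 2 * k ^ 2 * α ^ (-2:ℤ) + μ ^ 4 / 2))
        = μ ^ 2 * (1 - k ^ 2) + μ ^ 4 / 2 * (1 - k ^ 2) := by
      rw [intervalIntegral.integral_add (hzint.const_mul _) intervalIntegrable_const]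
      rw [intervalIntegral.integral_const_mul, hzval, intervalIntegral.integral_const]
      field_simp
      ring
    calc |∫ α in (k ^ 2)..(1:ℝ), (f α - g α + μ ^ 2 * α⁻¹)|
        ≤ |∫ α in (k ^ 2)..(1:ℝ), (μ ^ 2 * k ^ 2 * α ^ (-2:ℤ) + μ ^ 4 / 2)| := h
      _ = μ ^ 2 * (1 - k ^ 2) + μ ^ 4 / 2 * (1 - k ^ 2) := by
          rw [hBval]
          exact abs_of_nonneg (by nlinarith [sq_nonneg μ, sq_nonneg (μ ^ 2)])
      _ ≤ μ ^ 2 + μ ^ 4 / 2 := by nlinarith [sq_nonneg μ, sq_nonneg (μ ^ 2)]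
  -- piece (0): the main term
  have hI0 : |(∫ α in (0:ℝ)..K, g α) - (k ^ 2)⁻¹| ≤ 1 := by
    rw [hgK]
    have h1 : 1 - Real.exp (-(k ^ 2 * k ^ 2)) ≤ k ^ 2 * k ^ 2 := by
      linarith [Real.add_one_le_exp (-(k ^ 2 * k ^ 2))]
    have h2 : Real.exp (-(k ^ 2 * k ^ 2)) ≤ 1 := by
      calc Real.exp (-(k ^ 2 * k ^ 2)) ≤ Real.exp 0 := Real.exp_le_exp.mpr (by nlinarith)
        _ = 1 := Real.exp_zero
    have heq : (k ^ 2)⁻¹ * Real.exp (-(k ^ 2 * k ^ 2)) - (k ^ 2)⁻¹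
        = -((k ^ 2)⁻¹ * (1 - Real.exp (-(k ^ 2 * k ^ 2)))) := by ring
    rw [heq, abs_neg, abs_of_nonneg (mul_nonneg (by positivity) (by linarith))]
    calc (k ^ 2)⁻¹ * (1 - Real.exp (-(k ^ 2 * k ^ 2))) ≤ (k ^ 2)⁻¹ * (k ^ 2 * k ^ 2) :=
          mul_le_mul_of_nonneg_left h1 (by positivity)
      _ = k ^ 2 := by field_simp
      _ ≤ 1 := hk21
  -- assembly
  have hT : (∫ α in (0:ℝ)..K, f α) - 1 / k ^ 2 - μ ^ 2 * Real.log (k ^ 2)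
      = ((∫ α in (0:ℝ)..K, g α) - (k ^ 2)⁻¹)
        + (∫ α in (0:ℝ)..(k ^ 2), (f α - g α))
        + ((∫ α in (k ^ 2)..(1:ℝ), (f α - g α)) - μ ^ 2 * Real.log (k ^ 2))
        + (∫ α in (1:ℝ)..K, (f α - g α)) := by
    rw [one_div]
    linarith [hsplit, hsubint]
  rw [hT]
  have habs := abs_add₄ ((∫ α in (0:ℝ)..K, g α) - (k ^ 2)⁻¹)
      (∫ α in (0:ℝ)..(k ^ 2), (f α - g α))
      ((∫ α in (k ^ 2)..(1:ℝ), (f α - g α)) - μ ^ 2 * Real.log (k ^ 2))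
      (∫ α in (1:ℝ)..K, (f α - g α))
  have hμ4 : 0 ≤ μ ^ 4 := by positivity
  linarith [hI0, hI1, hI2, hI3]
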